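/- For any K-user topology α, any subset S ⊆ [K] of users, and any power allocation r with r_k ≤ 0 achieving positive GDoF d_k(α,r) > 0 for all k ∈ S: if S = {β_1,...,β_L} with L > 1 and r_{β_1} ≥ r_{β_2} ≥ ... ≥ r_{β_L}, then D_{Σ,b}(α) ≥ Σ_{i=1}^{L-1} (d_{β_i}(α,r) + r_{β_L} - r_{β_i}) + (d_{β_L}(α,r) + r_{β_{L-1}} - r_{β_L}). -/
import Mathlib


open Finset

/-- Positive part `(x)^+ = max(x,0)`. -/
noncomputable def pPart (x : ℝ) : ℝ := max x 0

/-- TIN GDoF of user `k` under topology `α` and power allocation `r`: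
`d_k(α,r) = (α_kk + r_k - max_{j≠k} (α_kj + r_j)^+)^+` (max over the empty set is 0). -/
noncomputable def gdof {K : ℕ} (α : Fin K → Fin K → ℝ) (r : Fin K → ℝ) (k : Fin K) : ℝ :=
  pPart (α k k + r k -
    ((Finset.univ.erase k).fold max 0 fun j => pPart (α k j + r j)))

/-- Sum GDoF under allocation `r`. -/
noncomputable def sumGdof {K : ℕ} (α : Fin K → Fin K → ℝ) (r : Fin K → ℝ) : ℝ :=
  ∑ k, gdof α r k

/-- Optimal-power-control sum GDoF: supremum over all allocations with `r_k ≤ 0`. -/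
noncomputable def Dopt {K : ℕ} (α : Fin K → Fin K → ℝ) : ℝ :=
  sSup {x : ℝ | ∃ r : Fin K → ℝ, (∀ k, r k ≤ 0) ∧ x = sumGdof α r}

/-- Sum GDoF achieved by binary power control with active set `T`:
`Σ_{k∈T} (α_kk - max_{j∈T, j≠k} α_kj)^+` (max over the empty set is 0). -/
noncomputable def binSum {K : ℕ} (α : Fin K → Fin K → ℝ) (T : Finset (Fin K)) : ℝ :=
  ∑ k ∈ T, pPart (α k k - ((T.erase k).fold max 0 fun j => α k j))

/-- Binary-power-control sum GDoF: maximum over all subsets of active users. -/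
noncomputable def Dbin {K : ℕ} (α : Fin K → Fin K → ℝ) : ℝ :=
  (Finset.univ : Finset (Finset (Fin K))).sup' ⟨∅, Finset.mem_univ ∅⟩ (binSum α)

/-- Key termwise bound. -/
lemma key_term {K : ℕ} (α : Fin K → Fin K → ℝ) (r : Fin K → ℝ) (k : Fin K)
    (T : Finset (Fin K)) (c : ℝ) (hc : c ≤ 0) (hpos : 0 < gdof α r k)
    (hT : ∀ j ∈ T.erase k, c ≤ r j) :
    gdof α r k + c - r k ≤ pPart (α k k - ((T.erase k).fold max 0 fun j => α k j)) := by
  set M : ℝ := (Finset.univ.erase k).fold max 0 fun j => pPart (α k j + r j) with hMdef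
  have hM0 : (0:ℝ) ≤ M := (Finset.le_fold_max _).2 (Or.inl le_rfl)
  have hx : gdof α r k = pPart (α k k + r k - M) := rfl
  have hgd : gdof α r k = α k k + r k - M := by
    have h := hpos
    rw [hx] at h ⊢
    unfold pPart at h ⊢
    rcases le_or_gt (α k k + r k - M) 0 with h' | h'
    · rw [max_eq_right h'] at h; exact absurd h (lt_irrefl 0)
    · rw [max_eq_left h'.le]
  have hF : ((T.erase k).fold max 0 fun j => α k j) ≤ M - c := by
    refine (Finset.fold_max_le _).2 ⟨by linarith, fun j hj => ?_⟩
    have hjk : j ≠ k := Finset.ne_of_mem_erase hj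
    have hjM : pPart (α k j + r j) ≤ M :=
      (Finset.le_fold_max _).2 (Or.inr ⟨j, Finset.mem_erase.2 ⟨hjk, Finset.mem_univ j⟩, le_rfl⟩)
    have h1 : α k j + r j ≤ M := le_trans (le_max_left _ _) hjM
    have h2 : c ≤ r j := hT j hj
    linarith
  have : α k k - ((T.erase k).fold max 0 fun j => α k j) ≥ α k k - M + c := by linarith
  calc gdof α r k + c - r k = α k k - M + c := by rw [hgd]; ring
    _ ≤ α k k - ((T.erase k).fold max 0 fun j => α k j) := by linarith
    _ ≤ pPart (α k k - ((T.erase k).fold max 0 fun j => α k j)) := le_max_left _ _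

/-- the binary bound `B_{[β_1,…,β_L]}` for `L > 1`: if the users `β_1,…,β_L`
(distinct, with `r_{β_1} ≥ … ≥ r_{β_L}`) all achieve positive GDoF under `r`, then
`D_{Σ,b}(α) ≥ Σ_{i<L} (d_{β_i} + r_{β_L} - r_{β_i}) + (d_{β_L} + r_{β_{L-1}} - r_{β_L})`. -/
theorem stmt_2 (K L : ℕ) (hL : 1 < L)
    (α : Fin K → Fin K → ℝ) (hα : ∀ i j, 0 ≤ α i j)
    (r : Fin K → ℝ) (hr : ∀ k, r k ≤ 0)
    (β : Fin L → Fin K) (hβ : Function.Injective β)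
    (hmono : ∀ i j : Fin L, i ≤ j → r (β j) ≤ r (β i))
    (hpos : ∀ i : Fin L, 0 < gdof α r (β i)) :
    (∑ i ∈ Finset.univ.erase (⟨L - 1, by omega⟩ : Fin L),
        (gdof α r (β i) + r (β ⟨L - 1, by omega⟩) - r (β i)))
      + (gdof α r (β ⟨L - 1, by omega⟩) + r (β ⟨L - 2, by omega⟩)
          - r (β ⟨L - 1, by omega⟩))
      ≤ Dbin α := by
  set last : Fin L := ⟨L - 1, by omega⟩ with hlast
  set pre : Fin L := ⟨L - 2, by omega⟩ with hpre
  set T : Finset (Fin K) := Finset.univ.image β with hT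
  have hrlast : r (β last) ≤ 0 := hr _
  have hrpre : r (β pre) ≤ 0 := hr _
  -- each j ∈ T is some β m
  have hmemT : ∀ j ∈ T, ∃ m : Fin L, β m = j := by
    intro j hj
    rcases Finset.mem_image.1 hj with ⟨m, _, hm⟩
    exact ⟨m, hm⟩
  have hbinT : binSum α T =
      ∑ i : Fin L, pPart (α (β i) (β i) - ((T.erase (β i)).fold max 0 fun j => α (β i) j)) := by
    unfold binSum
    rw [hT, Finset.sum_image (fun x _ y _ h => hβ h)]
  have hsum : (∑ i ∈ Finset.univ.erase last,
        (gdof α r (β i) + r (β last) - r (β i)))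
      + (gdof α r (β last) + r (β pre) - r (β last))
      ≤ binSum α T := by
    rw [hbinT, ← Finset.sum_erase_add _ _ (Finset.mem_univ last)]
    gcongr with i hi
    · -- i ≠ last
      refine key_term α r (β i) T (r (β last)) hrlast (hpos i) ?_
      intro j hj
      rcases hmemT j (Finset.mem_of_mem_erase hj) with ⟨m, hm⟩
      subst hm
      exact hmono m last (by simp [hlast, Fin.le_def]; omega)
    · refine key_term α r (β last) T (r (β pre)) hrpre (hpos last) ?_
      intro j hj
      rcases hmemT j (Finset.mem_of_mem_erase hj) with ⟨m, hm⟩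
      subst hm
      have hmne : m ≠ last := fun h => (Finset.ne_of_mem_erase hj) (by rw [h])
      have : m ≤ pre := by
        have h1 : m.val < L := m.isLt
        have h2 : m.val ≠ L - 1 := fun h => hmne (Fin.ext h)
        simp [hpre, Fin.le_def]; omega
      exact hmono m pre this
  exact le_trans hsum (Finset.le_sup' (binSum α) (Finset.mem_univ T))
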